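/- Observational entropy is monotone under coarsening: if index set J and index sets I^(j) partition the index set I, and q_j = ∑_{i ∈ I^(j)} p_i, W_j = ∑_{i ∈ I^(j)} V_i, then -∑_j q_j ln(q_j/W_j) ≥ -∑_i p_i ln(p_i/V_i), with equality iff for all j and all i ∈ I^(j), p_i = (V_i/W_j) q_j. -/

import Mathlib

open Real Finset

/-- Pointwise log-sum inequality: `x - y ≤ x log(x/y)` with equality iff `x = y`. -/
lemma klAux {x y : ℝ} (hx : 0 ≤ x) (hy : 0 < y) :
    x - y ≤ x * Real.log (x / y) ∧ (x - y = x * Real.log (x / y) ↔ x = y) := by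
  rcases eq_or_lt_of_le hx with h | hx'
  · refine ⟨by rw [← h]; simp; linarith, ?_⟩
    rw [← h]; simp
    constructor
    · intro h'; linarith
    · intro h'; linarith
  · have hxy : 0 < y / x := div_pos hy hx'
    have key : Real.log (y / x) ≤ y / x - 1 := Real.log_le_sub_one_of_pos hxy
    have hlog : Real.log (x / y) = - Real.log (y / x) := by
      rw [← Real.log_inv]; congr 1; field_simp
    constructor
    · rw [hlog]
      have := mul_le_mul_of_nonneg_left key (le_of_lt hx')
      have hx0 : x ≠ 0 := ne_of_gt hx'
      calc x - y = -(x * (y / x - 1)) := by field_simp; ring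
        _ ≤ -(x * Real.log (y / x)) := by linarith
        _ = x * -Real.log (y / x) := by ring
    · constructor
      · intro heq
        by_contra hne
        have hne' : y / x ≠ 1 := by
          intro h'; apply hne
          field_simp at h'; linarith
        have key' : Real.log (y / x) < y / x - 1 := Real.log_lt_sub_one_of_pos hxy hne'
        have := mul_lt_mul_of_pos_left key' hx'
        rw [hlog] at heq
        have hx0 : x ≠ 0 := ne_of_gt hx'
        have : x * (y / x - 1) = y - x := by field_simp
        nlinarith [mul_lt_mul_of_pos_left key' hx']
      · intro h; subst h; simp [div_self (ne_of_gt hx')]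

/-- Block version of the log-sum inequality with equality condition. -/
lemma klBlock {ι : Type*} (s : Finset ι) (p V : ι → ℝ)
    (hp : ∀ i ∈ s, 0 ≤ p i) (hV : ∀ i ∈ s, 0 < V i) :
    (∑ i ∈ s, p i) * Real.log ((∑ i ∈ s, p i) / (∑ i ∈ s, V i)) ≤
      ∑ i ∈ s, p i * Real.log (p i / V i) ∧
    ((∑ i ∈ s, p i) * Real.log ((∑ i ∈ s, p i) / (∑ i ∈ s, V i)) =
      ∑ i ∈ s, p i * Real.log (p i / V i)
      ↔ ∀ i ∈ s, p i = V i / (∑ i ∈ s, V i) * (∑ i ∈ s, p i)) := by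
  set Q := ∑ i ∈ s, p i with hQ
  set Wt := ∑ i ∈ s, V i with hWt
  have hQ0 : 0 ≤ Q := Finset.sum_nonneg hp
  rcases eq_or_lt_of_le hQ0 with hQz | hQpos
  · -- Q = 0: all p i = 0
    have hall : ∀ i ∈ s, p i = 0 := by
      intro i hi
      exact (Finset.sum_eq_zero_iff_of_nonneg hp).mp hQz.symm i hi
    have hsum0 : ∑ i ∈ s, p i * Real.log (p i / V i) = 0 := by
      apply Finset.sum_eq_zero; intro i hi; rw [hall i hi]; ring
    refine ⟨by rw [hsum0, ← hQz]; simp, ?_⟩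
    rw [hsum0, ← hQz]
    simp only [zero_mul, eq_self_iff_true, true_iff]
    intro i hi
    rw [hall i hi]; ring
  · -- Q > 0, so s nonempty and Wt > 0
    have hsne : s.Nonempty := by
      by_contra h
      rw [Finset.not_nonempty_iff_eq_empty] at h
      simp [hQ, h] at hQpos
    have hWt0 : 0 < Wt := Finset.sum_pos hV hsne
    -- termwise: p i - V i * Q / Wt ≤ p i * log (p i / (V i * Q / Wt))
    have hterm : ∀ i ∈ s, p i - V i * Q / Wt ≤
        p i * Real.log (p i / V i) - p i * Real.log (Q / Wt) := by
      intro i hi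
      have hy : 0 < V i * Q / Wt := div_pos (mul_pos (hV i hi) hQpos) hWt0
      have h1 := (klAux (hp i hi) hy).1
      have h2 : p i * Real.log (p i / (V i * Q / Wt)) =
          p i * Real.log (p i / V i) - p i * Real.log (Q / Wt) := by
        rcases eq_or_lt_of_le (hp i hi) with hpz | hpp
        · rw [← hpz]; ring
        · rw [show p i / (V i * Q / Wt) = (p i / V i) / (Q / Wt) by
            rw [div_div_div_eq, div_div_eq_mul_div]]
          rw [Real.log_div (ne_of_gt (div_pos hpp (hV i hi))) (ne_of_gt (div_pos hQpos hWt0))]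
          ring
      linarith [h1, h2.le, h2.ge]
    have hsumy : ∑ i ∈ s, (p i - V i * Q / Wt) = 0 := by
      simp_rw [mul_div_assoc]
      rw [Finset.sum_sub_distrib, ← Finset.sum_mul, ← hQ, ← hWt]
      field_simp
      ring
    have hsumineq : (0:ℝ) ≤ ∑ i ∈ s, (p i * Real.log (p i / V i)
        - p i * Real.log (Q / Wt)) := by
      rw [← hsumy]
      exact Finset.sum_le_sum hterm
    have hsplit : ∑ i ∈ s, (p i * Real.log (p i / V i) - p i * Real.log (Q / Wt)) =
        (∑ i ∈ s, p i * Real.log (p i / V i)) - Q * Real.log (Q / Wt) := by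
      rw [Finset.sum_sub_distrib, ← Finset.sum_mul, ← hQ]
    constructor
    · linarith [hsumineq, hsplit.le, hsplit.ge]
    · constructor
      · intro heq
        have hzero : ∑ i ∈ s, (p i - V i * Q / Wt) =
            ∑ i ∈ s, (p i * Real.log (p i / V i) - p i * Real.log (Q / Wt)) := by
          rw [hsumy, hsplit]; linarith
        have hall := (Finset.sum_eq_sum_iff_of_le hterm).mp hzero
        intro i hi
        have hy : 0 < V i * Q / Wt := div_pos (mul_pos (hV i hi) hQpos) hWt0
        have heqi := hall i hi
        have h2 : p i * Real.log (p i / (V i * Q / Wt)) =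
            p i * Real.log (p i / V i) - p i * Real.log (Q / Wt) := by
          rcases eq_or_lt_of_le (hp i hi) with hpz | hpp
          · rw [← hpz]; ring
          · rw [show p i / (V i * Q / Wt) = (p i / V i) / (Q / Wt) by
              rw [div_div_div_eq, div_div_eq_mul_div]]
            rw [Real.log_div (ne_of_gt (div_pos hpp (hV i hi))) (ne_of_gt (div_pos hQpos hWt0))]
            ring
        have := (klAux (hp i hi) hy).2.mp (by linarith [h2.le, h2.ge])
        rw [this]; ring
      · intro hcond
        have : ∀ i ∈ s, p i * Real.log (p i / V i) = p i * Real.log (Q / Wt) := by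
          intro i hi
          rw [hcond i hi]
          congr 1
          rw [show V i / Wt * Q / V i = Q / Wt by
            field_simp [ne_of_gt (hV i hi), ne_of_gt hWt0]
            try ring]
        rw [Finset.sum_congr rfl this, ← Finset.sum_mul, ← hQ]

theorem obs_entropy_monotone_coarsening
    {ι J : Type*} [Fintype ι] [Fintype J] [DecidableEq J]
    (p V : ι → ℝ) (hp : ∀ i, 0 ≤ p i) (hpsum : ∑ i, p i = 1)
    (hV : ∀ i, 0 < V i)
    (g : ι → J) (q W : J → ℝ)
    (hq : ∀ j, q j = ∑ i ∈ Finset.univ.filter (g · = j), p i)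
    (hW : ∀ j, W j = ∑ i ∈ Finset.univ.filter (g · = j), V i) :
    (-∑ i, p i * Real.log (p i / V i) ≤ -∑ j, q j * Real.log (q j / W j)) ∧
      (-∑ i, p i * Real.log (p i / V i) = -∑ j, q j * Real.log (q j / W j)
        ↔ ∀ j, ∀ i, g i = j → p i = (V i / W j) * q j) := by
  have hblock := fun j => klBlock (Finset.univ.filter (g · = j)) p V
    (fun i _ => hp i) (fun i _ => hV i)
  have hfib : ∑ j, ∑ i ∈ Finset.univ.filter (g · = j), p i * Real.log (p i / V i)
      = ∑ i, p i * Real.log (p i / V i) := by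
    exact Finset.sum_fiberwise Finset.univ g (fun i => p i * Real.log (p i / V i))
  have htermle : ∀ j ∈ Finset.univ, q j * Real.log (q j / W j) ≤
      ∑ i ∈ Finset.univ.filter (g · = j), p i * Real.log (p i / V i) := by
    intro j _
    rw [hq j, hW j]
    exact (hblock j).1
  have hsums : ∑ j, q j * Real.log (q j / W j) ≤ ∑ i, p i * Real.log (p i / V i) := by
    rw [← hfib]
    exact Finset.sum_le_sum htermle
  refine ⟨by linarith, ?_⟩
  constructor
  · intro heq
    have heq' : ∑ j, q j * Real.log (q j / W j) =
        ∑ j, ∑ i ∈ Finset.univ.filter (g · = j), p i * Real.log (p i / V i) := by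
      rw [hfib]; linarith
    have hall := (Finset.sum_eq_sum_iff_of_le htermle).mp heq'
    intro j i hgi
    have hj := hall j (Finset.mem_univ j)
    rw [hq j, hW j] at hj
    have := (hblock j).2.mp hj i (by simp [hgi])
    rw [this, hq j, hW j]
  · intro hcond
    have : ∀ j ∈ Finset.univ, q j * Real.log (q j / W j) =
        ∑ i ∈ Finset.univ.filter (g · = j), p i * Real.log (p i / V i) := by
      intro j _
      rw [hq j, hW j]
      apply (hblock j).2.mpr
      intro i hi
      simp only [Finset.mem_filter, Finset.mem_univ, true_and] at hi
      have := hcond j i hi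
      rw [this, hq j, hW j]
    rw [Finset.sum_congr rfl this, hfib]
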